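/- Let A = F2[h^{±1}][p, v2, v3, v4, v5, ...] be a polynomial algebra over the Laurent ring F2[h^{±1}] on countably many variables p, v2, v3, v4, .... Let d be the unique F2[h^{±1}]-linear derivation with d(p) = 0, d(v2) = 0, and d(v_k) = h·v_{k-1}² for all k ≥ 3. Then d∘d = 0 and the cohomology ring ker(d)/im(d) is isomorphic as an F2[h^{±1}]-algebra to F2[h^{±1}][p, v2]/(v2²). -/

import Mathlib

open MvPolynomial

noncomputable section

/-- `L = F2[h^{±1}]`, the Laurent polynomial ring over `F2`. -/
def L : Type := LaurentPolynomial (ZMod 2)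

instance : CommRing L := inferInstanceAs (CommRing (LaurentPolynomial (ZMod 2)))

/-- The invertible variable `h`. -/
def h : L := LaurentPolynomial.T 1

/-- `A = F2[h^{±1}][p, v₂, v₃, v₄, …]`, with `p = X 0` and `vₖ = X (k-1)` for `k ≥ 2`. -/
abbrev A : Type := MvPolynomial ℕ L

/-- The `F2[h^{±1}]`-linear derivation with `d p = 0`, `d v₂ = 0`,
`d vₖ = h·v_{k-1}²` for `k ≥ 3`. -/
noncomputable def d : Derivation L A A :=
  MvPolynomial.mkDerivation L (fun n : ℕ => if n ≤ 1 then 0 else C h * (X (n - 1)) ^ 2)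

/-- The kernel of `d`, as a subalgebra of `A`. -/
def kerd : Subalgebra L A where
  carrier := {a | d a = 0}
  mul_mem' := fun {a b} ha hb => by
    show d (a * b) = 0
    rw [Derivation.leibniz, ha, hb, smul_zero, smul_zero, add_zero]
  add_mem' := fun {a b} ha hb => by
    show d (a + b) = 0
    rw [map_add, ha, hb, add_zero]
  algebraMap_mem' := fun r => Derivation.map_algebraMap d r

instance : HasQuotient kerd (Ideal kerd) := Ideal.instHasQuotient

/-- The image of `d`, as an ideal of `ker d`. -/
def imd : Ideal kerd := Ideal.span {y : kerd | ∃ a : A, d a = (y : A)}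

instance : CommRing (kerd ⧸ imd) := Ideal.Quotient.commRing imd
instance : Algebra L (kerd ⧸ imd) := Ideal.Quotient.algebra L

/-- The target `F2[h^{±1}][p, v₂]/(v₂²)`, with `p = X 0` and `v₂ = X 1`. -/
abbrev T2 : Type :=
  MvPolynomial (Fin 2) L ⧸ Ideal.span {(X 1 : MvPolynomial (Fin 2) L) ^ 2}

namespace Aux

def hinv : L := LaurentPolynomial.T (-1)

lemma h_mul_hinv : h * hinv = 1 := by
  show (LaurentPolynomial.T 1 * LaurentPolynomial.T (-1) : LaurentPolynomial (ZMod 2)) = 1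
  refine (LaurentPolynomial.T_add (R := ZMod 2) 1 (-1)).symm.trans ?_
  norm_num [LaurentPolynomial.T_zero]

lemma hinv_mul_h : hinv * h = 1 := by rw [mul_comm]; exact h_mul_hinv

lemma L_two : (2 : L) = 0 := by
  show (2 : LaurentPolynomial (ZMod 2)) = 0
  rw [show (2 : LaurentPolynomial (ZMod 2)) = 1 + 1 from one_add_one_eq_two.symm]
  rw [show (1 : LaurentPolynomial (ZMod 2)) = LaurentPolynomial.C 1 from (map_one _).symm,
    ← map_add, show (1 + 1 : ZMod 2) = 0 by decide, map_zero]

lemma natCast_even {k : ℕ} (hk : k % 2 = 0) : (k : L) = 0 := by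
  obtain ⟨m, rfl⟩ : ∃ m, k = 2 * m := ⟨k / 2, by omega⟩
  push_cast
  rw [L_two, zero_mul]

lemma natCast_odd {k : ℕ} (hk : k % 2 = 1) : (k : L) = 1 := by
  obtain ⟨m, rfl⟩ : ∃ m, k = 2 * m + 1 := ⟨k / 2, by omega⟩
  push_cast
  rw [L_two, zero_mul, zero_add]

lemma A_two : (2 : A) = 0 := by
  rw [← map_ofNat (C : L →+* A) 2, show ((2 : L)) = 0 from L_two, map_zero]

lemma addSelf (x : A) : x + x = 0 := by
  have : x + x = 2 * x := by ring
  rw [this, A_two, zero_mul]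

lemma d_X_le {n : ℕ} (hn : n ≤ 1) : d (X n) = 0 := by
  unfold d; rw [mkDerivation_X, if_pos hn]

lemma d_X_ge {n : ℕ} (hn : 2 ≤ n) : d (X n) = C h * X (n - 1) ^ 2 := by
  unfold d; rw [mkDerivation_X, if_neg (by omega)]

lemma d_C (r : L) : d (C r) = 0 := by
  rw [show (C r : A) = algebraMap L A r from rfl]
  exact Derivation.map_algebraMap d r

lemma dd_X (n : ℕ) : d (d (X n)) = 0 := by
  rcases Nat.lt_or_ge n 2 with hn | hn
  · rw [d_X_le (by omega), map_zero]
  · rw [d_X_ge hn, Derivation.leibniz, smul_eq_mul, smul_eq_mul, d_C, mul_zero, add_zero,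
      pow_two, Derivation.leibniz, smul_eq_mul, addSelf, mul_zero]

lemma dd (a : A) : d (d a) = 0 := by
  induction a using MvPolynomial.induction_on with
  | C r => rw [d_C, map_zero]
  | add p q hp hq => rw [map_add, map_add, hp, hq, add_zero]
  | mul_X p n hp =>
    rw [Derivation.leibniz, smul_eq_mul, smul_eq_mul, map_add,
      Derivation.leibniz, smul_eq_mul, smul_eq_mul,
      Derivation.leibniz, smul_eq_mul, smul_eq_mul, dd_X, hp, mul_zero, mul_zero,
      mul_comm (d (X n)) (d p)]
    exact addSelf _

lemma d_unique (D : Derivation L A A) (h0 : D (X 0) = 0) (h1 : D (X 1) = 0)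
    (hk : ∀ k : ℕ, 3 ≤ k → D (X (k - 1)) = C h * (X (k - 2)) ^ 2) : D = d := by
  apply MvPolynomial.derivation_ext
  intro i
  match i with
  | 0 => rw [h0, d_X_le (by norm_num)]
  | 1 => rw [h1, d_X_le le_rfl]
  | (n + 2) =>
    have hh := hk (n + 3) (by omega)
    have e1 : n + 3 - 1 = n + 2 := rfl
    have e2 : n + 3 - 2 = n + 1 := rfl
    rw [e1, e2] at hh
    rw [hh, d_X_ge (by omega)]
    norm_num


/-! ### The contracting homotopy -/

def Badb (σ : ℕ →₀ ℕ) (n : ℕ) : Prop := 2 ≤ n ∧ (σ n % 2 = 1 ∨ 2 ≤ σ (n - 1))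

instance (σ : ℕ →₀ ℕ) : DecidablePred (Badb σ) := fun n => by
  unfold Badb; infer_instance

def bnd (σ : ℕ →₀ ℕ) : ℕ := (σ.support.sup id) + 1

def top (σ : ℕ →₀ ℕ) : ℕ := Nat.findGreatest (Badb σ) (bnd σ)

def Harm (σ : ℕ →₀ ℕ) : Prop := σ 1 ≤ 1 ∧ ∀ m, 2 ≤ m → σ m = 0

def tee (i : ℕ) (σ : ℕ →₀ ℕ) : ℕ →₀ ℕ := σ - Finsupp.single i 1 + Finsupp.single (i - 1) 2

def rho (σ : ℕ →₀ ℕ) : ℕ →₀ ℕ := σ + Finsupp.single (top σ) 1 - Finsupp.single (top σ - 1) 2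

open Classical in
def smono (σ : ℕ →₀ ℕ) : A :=
  if 2 ≤ top σ ∧ σ (top σ) = 0 ∧ 2 ≤ σ (top σ - 1) then monomial (rho σ) hinv else 0

open Classical in
def pMono (σ : ℕ →₀ ℕ) : A := if Harm σ then monomial σ 1 else 0

def sMap : A →ₗ[L] A := (basisMonomials ℕ L).constr L smono

def pMap : A →ₗ[L] A := (basisMonomials ℕ L).constr L pMono

lemma tee_apply (i : ℕ) (σ : ℕ →₀ ℕ) (m : ℕ) :
    tee i σ m = σ m - (if i = m then 1 else 0) + (if i - 1 = m then 2 else 0) := by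
  simp [tee, Finsupp.single_apply]

lemma rho_apply (σ : ℕ →₀ ℕ) (m : ℕ) :
    rho σ m = σ m + (if top σ = m then 1 else 0) - (if top σ - 1 = m then 2 else 0) := by
  simp [rho, Finsupp.single_apply]

lemma bad_le_bnd {σ : ℕ →₀ ℕ} {n : ℕ} (hb : Badb σ n) : n ≤ bnd σ := by
  obtain ⟨h2, hor⟩ := hb
  rcases hor with ho | hge
  · have h1 : n ∈ σ.support := Finsupp.mem_support_iff.2 (by omega)
    have h3 := Finset.le_sup (f := id) h1
    simp only [id_eq] at h3
    unfold bnd; omega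
  · have h1 : n - 1 ∈ σ.support := Finsupp.mem_support_iff.2 (by omega)
    have h3 := Finset.le_sup (f := id) h1
    simp only [id_eq] at h3
    unfold bnd; omega

lemma top_badb {σ : ℕ →₀ ℕ} {n : ℕ} (hb : Badb σ n) : Badb σ (top σ) :=
  Nat.findGreatest_spec (bad_le_bnd hb) hb

lemma le_top {σ : ℕ →₀ ℕ} {n : ℕ} (hb : Badb σ n) : n ≤ top σ :=
  Nat.le_findGreatest (bad_le_bnd hb) hb

lemma top_eq {σ : ℕ →₀ ℕ} {N : ℕ} (hb : Badb σ N) (hmax : ∀ m, N < m → ¬ Badb σ m) :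
    top σ = N := by
  have h1 := le_top hb
  rcases Nat.lt_or_ge N (top σ) with hlt | hge
  · exact absurd (top_badb hb) (hmax _ hlt)
  · omega

lemma harm_of_no_bad {σ : ℕ →₀ ℕ} (hn : ∀ n, ¬ Badb σ n) : Harm σ := by
  constructor
  · have h2 := hn 2
    unfold Badb at h2
    simp only [show (2:ℕ) - 1 = 1 from rfl] at h2
    omega
  · intro m hm
    have h1 := hn m
    have h2 := hn (m + 1)
    unfold Badb at h1 h2
    simp only [Nat.add_sub_cancel] at h2
    omega

lemma no_bad_of_harm {σ : ℕ →₀ ℕ} (hh : Harm σ) : ∀ n, ¬ Badb σ n := by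
  rintro n ⟨h2, hor⟩
  have hσn : σ n = 0 := hh.2 n h2
  have hσn1 : σ (n - 1) ≤ 1 := by
    rcases Nat.lt_or_ge (n - 1) 2 with hlt | hge
    · have he : n - 1 = 1 ∨ n - 1 = 0 := by omega
      rcases he with he | he
      · rw [he]; exact hh.1
      · omega
    · rw [hh.2 _ hge]; omega
  omega

lemma d_monomial (σ : ℕ →₀ ℕ) (r : L) :
    d (monomial σ r) = r • ∑ i ∈ σ.support.filter (fun i => 2 ≤ i ∧ σ i % 2 = 1),
      monomial (tee i σ) h := by
  unfold d
  rw [mkDerivation_monomial]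
  congr 1
  rw [Finsupp.sum, Finset.sum_filter]
  apply Finset.sum_congr rfl
  intro i _
  rcases Nat.lt_or_ge i 2 with h2 | h2
  · rw [if_pos (by omega : i ≤ 1), if_neg (by omega), smul_zero]
  · rw [if_neg (by omega : ¬ i ≤ 1)]
    rw [show (C h * X (i-1) ^ 2 : A) = monomial (Finsupp.single (i-1) 2) h by
      rw [X_pow_eq_monomial, C_mul_monomial, mul_one]]
    rw [smul_eq_mul, monomial_mul]
    by_cases ho : σ i % 2 = 1
    · rw [if_pos (by exact ⟨h2, ho⟩), natCast_odd ho, one_mul]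
      rfl
    · rw [if_neg (by tauto), natCast_even (by omega), zero_mul, monomial_zero]

lemma sMap_monomial_one (σ : ℕ →₀ ℕ) : sMap (monomial σ 1) = smono σ := by
  have h1 : (monomial σ (1:L) : A) = (basisMonomials ℕ L) σ := by
    rw [coe_basisMonomials]
  rw [h1]
  exact Module.Basis.constr_basis _ _ _ _

lemma pMap_monomial_one (σ : ℕ →₀ ℕ) : pMap (monomial σ 1) = pMono σ := by
  have h1 : (monomial σ (1:L) : A) = (basisMonomials ℕ L) σ := by
    rw [coe_basisMonomials]
  rw [h1]
  exact Module.Basis.constr_basis _ _ _ _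

lemma sMap_monomial (σ : ℕ →₀ ℕ) (r : L) : sMap (monomial σ r) = r • smono σ := by
  have h1 : (monomial σ r : A) = r • monomial σ 1 := by
    rw [smul_monomial, smul_eq_mul, mul_one]
  rw [h1, map_smul, sMap_monomial_one]


/-! ### The key homotopy identity on monomials -/

lemma key (σ : ℕ →₀ ℕ) :
    d (smono σ) + sMap (d (monomial σ 1)) + pMono σ = monomial σ 1 := by
  by_cases hbad : ∃ n, Badb σ n
  case neg =>
    push_neg at hbad
    have hharm := harm_of_no_bad hbad
    have hfilter : σ.support.filter (fun i => 2 ≤ i ∧ σ i % 2 = 1) = ∅ := by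
      rw [Finset.filter_eq_empty_iff]
      intro i _ hc
      exact hbad i ⟨hc.1, Or.inl hc.2⟩
    have hd0 : d (monomial σ (1:L)) = 0 := by
      rw [d_monomial, hfilter, Finset.sum_empty, smul_zero]
    have hs0 : smono σ = 0 := by
      unfold smono
      rw [if_neg]
      rintro ⟨hc1, -, hc3⟩
      exact hbad (top σ) ⟨hc1, Or.inr hc3⟩
    rw [hs0, map_zero, hd0, map_zero, zero_add, zero_add]
    unfold pMono
    rw [if_pos hharm]
  case pos =>
    obtain ⟨n0, hn0⟩ := hbad
    obtain ⟨N, hNdef⟩ : ∃ N, top σ = N := ⟨_, rfl⟩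
    have hBadN : Badb σ N := hNdef ▸ top_badb hn0
    have hN2 : 2 ≤ N := hBadN.1
    have hmax : ∀ m, N < m → ¬ Badb σ m := by
      intro m hm hb
      have := le_top hb
      omega
    have hupOdd : ∀ m, N < m → σ m % 2 = 0 := by
      intro m hm
      have hx := hmax m hm
      unfold Badb at hx
      omega
    have hupLe : ∀ j, N ≤ j → σ j ≤ 1 := by
      intro j hj
      have hx := hmax (j + 1) (by omega)
      unfold Badb at hx
      simp only [Nat.add_sub_cancel] at hx
      omega
    have hσN : σ N ≤ 1 := hupLe N le_rfl
    have hnoharm : pMono σ = 0 := by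
      unfold pMono
      rw [if_neg]
      intro hh
      exact no_bad_of_harm hh N hBadN
    set F := σ.support.filter (fun i => 2 ≤ i ∧ σ i % 2 = 1) with hF
    have hFfacts : ∀ i ∈ F, 2 ≤ i ∧ σ i % 2 = 1 ∧ i ≤ N := by
      intro i hi
      rw [hF, Finset.mem_filter] at hi
      exact ⟨hi.2.1, hi.2.2, le_top ⟨hi.2.1, Or.inl hi.2.2⟩ |>.trans_eq hNdef⟩
    have hsd : sMap (d (monomial σ 1)) = ∑ i ∈ F, h • smono (tee i σ) := by
      rw [d_monomial, one_smul, map_sum]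
      exact Finset.sum_congr rfl fun i _ => sMap_monomial _ _
    -- a reusable fact : no bad index above N for tee i σ, provided tee i σ N ≤ 1
    have hmaxtee : ∀ i, i ≤ N → tee i σ N ≤ 1 → ∀ m, N < m → ¬ Badb (tee i σ) m := by
      intro i hiN hteeN m hm hb
      have hv1 : tee i σ m = σ m := by
        rw [tee_apply, if_neg (by omega), if_neg (by omega)]
        omega
      have hm2 := hupOdd m hm
      rcases eq_or_ne (m - 1) N with he | he
      · unfold Badb at hb
        rw [hv1, he] at hb
        omega
      · have hv2 : tee i σ (m - 1) = σ (m - 1) := by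
          rw [tee_apply, if_neg (by omega), if_neg (by omega)]
          omega
        have := hupLe (m - 1) (by omega)
        unfold Badb at hb
        rw [hv1, hv2] at hb
        omega
    rcases (show σ N = 1 ∨ σ N = 0 by omega) with hA | hB
    -- ===================== Case a : σ N = 1 =====================
    · have hs0 : smono σ = 0 := by
        unfold smono
        rw [hNdef, if_neg]
        rintro ⟨-, hc, -⟩
        omega
      rw [hs0, map_zero, zero_add, hnoharm, add_zero, hsd]
      have hNF : N ∈ F := by
        rw [hF, Finset.mem_filter, Finsupp.mem_support_iff]
        exact ⟨by omega, by omega, by omega⟩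
      rw [Finset.sum_eq_single_of_mem N hNF ?side]
      case side =>
        intro i hi hiN
        obtain ⟨hi2, hiodd, hile⟩ := hFfacts i hi
        have hiltN : i < N := by omega
        have ht1 : tee i σ N = σ N := by
          rw [tee_apply, if_neg (by omega), if_neg (by omega)]
          omega
        have htopt : top (tee i σ) = N := by
          apply top_eq
          · exact ⟨hN2, Or.inl (by rw [ht1]; omega)⟩
          · exact hmaxtee i (by omega) (by omega)
        have hsz : smono (tee i σ) = 0 := by
          unfold smono
          rw [htopt, if_neg]
          rintro ⟨-, hc, -⟩
          rw [ht1] at hc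
          omega
        rw [hsz, smul_zero]
      -- main term
      have ht1 : tee N σ N = 0 := by
        rw [tee_apply]
        split_ifs <;> omega
      have ht2 : tee N σ (N - 1) = σ (N - 1) + 2 := by
        rw [tee_apply]
        split_ifs <;> omega
      have htopt : top (tee N σ) = N := by
        apply top_eq
        · exact ⟨hN2, Or.inr (by omega)⟩
        · exact hmaxtee N le_rfl (by omega)
      have hsm : smono (tee N σ) = monomial (rho (tee N σ)) hinv := by
        unfold smono
        rw [htopt, if_pos ⟨hN2, ht1, by omega⟩]
      have hrho : rho (tee N σ) = σ := by
        ext m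
        rw [rho_apply, htopt, tee_apply]
        rcases eq_or_ne N m with rfl | h1
        · split_ifs <;> omega
        rcases eq_or_ne (N - 1) m with rfl | h2
        · split_ifs <;> omega
        split_ifs <;> omega
      rw [hsm, hrho, smul_monomial, smul_eq_mul, h_mul_hinv]
    -- ===================== Case b : σ N = 0 =====================
    · have hN1 : 2 ≤ σ (N - 1) := by
        rcases hBadN.2 with hc | hc
        · omega
        · exact hc
      have hsm : smono σ = monomial (rho σ) hinv := by
        unfold smono
        rw [hNdef, if_pos ⟨hN2, hB, hN1⟩]
      have hρ : ∀ m, rho σ m = σ m + (if N = m then 1 else 0) - (if N - 1 = m then 2 else 0) := by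
        intro m
        rw [rho_apply, hNdef]
      have hGF : (rho σ).support.filter (fun i => 2 ≤ i ∧ rho σ i % 2 = 1) = insert N F := by
        ext i
        simp only [Finset.mem_insert, Finset.mem_filter, Finsupp.mem_support_iff, hF]
        have hρi := hρ i
        rcases eq_or_ne N i with rfl | hiN
        · rw [if_pos rfl, if_neg (by omega)] at hρi
          constructor
          · intro _
            exact Or.inl rfl
          · intro _
            exact ⟨by omega, by omega, by omega⟩
        · rcases eq_or_ne (N - 1) i with rfl | hiN1
          · rw [if_neg (by omega), if_pos rfl] at hρi
            constructor
            · rintro ⟨h1, h2, h3⟩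
              exact Or.inr ⟨by omega, h2, by omega⟩
            · rintro (he | ⟨h1, h2, h3⟩)
              · omega
              · exact ⟨by omega, h2, by omega⟩
          · rw [if_neg (by omega), if_neg (by omega)] at hρi
            constructor
            · rintro ⟨h1, h2, h3⟩
              exact Or.inr ⟨by omega, h2, by omega⟩
            · rintro (he | ⟨h1, h2, h3⟩)
              · omega
              · exact ⟨by omega, h2, by omega⟩
      have hNF : N ∉ F := by
        rw [hF, Finset.mem_filter, Finsupp.mem_support_iff]
        rintro ⟨hc, -⟩
        omega
      have hteeN : tee N (rho σ) = σ := by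
        ext m
        rw [tee_apply, hρ m]
        rcases eq_or_ne N m with rfl | h1
        · split_ifs <;> omega
        rcases eq_or_ne (N - 1) m with rfl | h2
        · split_ifs <;> omega
        split_ifs <;> omega
      have hmatch : ∀ i ∈ F, h • smono (tee i σ) = monomial (tee i (rho σ)) 1 := by
        intro i hi
        obtain ⟨hi2, hiodd, hile⟩ := hFfacts i hi
        have hiltN : i < N := by
          rcases eq_or_ne i N with rfl | hne
          · omega
          · omega
        have ht1 : tee i σ N = 0 := by
          rw [tee_apply, if_neg (by omega), if_neg (by omega)]
          omega
        have ht2 : 2 ≤ tee i σ (N - 1) := by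
          rcases eq_or_ne i (N - 1) with rfl | hne
          · rw [tee_apply, if_pos rfl, if_neg (by omega)]
            omega
          · rw [tee_apply, if_neg (by omega), if_neg (by omega)]
            omega
        have htopt : top (tee i σ) = N := by
          apply top_eq
          · exact ⟨hN2, Or.inr ht2⟩
          · exact hmaxtee i (by omega) (by omega)
        have hsm2 : smono (tee i σ) = monomial (rho (tee i σ)) hinv := by
          unfold smono
          rw [htopt, if_pos ⟨hN2, ht1, ht2⟩]
        have hind : rho (tee i σ) = tee i (rho σ) := by
          ext m
          have e1 : rho (tee i σ) m
              = tee i σ m + (if N = m then 1 else 0) - (if N - 1 = m then 2 else 0) := by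
            rw [rho_apply, htopt]
          rw [e1, tee_apply, tee_apply, hρ m]
          rcases eq_or_ne N m with rfl | h1
          · split_ifs <;> omega
          rcases eq_or_ne (N - 1) m with rfl | h2
          · split_ifs <;> omega
          rcases eq_or_ne i m with rfl | h3
          · split_ifs <;> omega
          rcases eq_or_ne (i - 1) m with rfl | h4
          · split_ifs <;> omega
          split_ifs <;> omega
        rw [hsm2, hind, smul_monomial, smul_eq_mul, h_mul_hinv]
      rw [hsm, d_monomial, hGF, Finset.sum_insert hNF, hteeN, smul_add, smul_monomial,
        smul_eq_mul, hinv_mul_h, hsd, hnoharm, add_zero, Finset.smul_sum]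
      have hjunk : ∀ i ∈ F, hinv • monomial (tee i (rho σ)) h = monomial (tee i (rho σ)) 1 := by
        intro i _
        rw [smul_monomial, smul_eq_mul, hinv_mul_h]
      rw [Finset.sum_congr rfl hjunk, Finset.sum_congr rfl hmatch, add_assoc, addSelf, add_zero]

/-! ### Consequences of the homotopy identity -/

lemma homotopy (z : A) : d (sMap z) + sMap (d z) + pMap z = z := by
  have hext : ((d : A →ₗ[L] A) ∘ₗ sMap + sMap ∘ₗ (d : A →ₗ[L] A) + pMap)
      = LinearMap.id := by
    apply Module.Basis.ext (basisMonomials ℕ L)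
    intro σ
    have hb : (basisMonomials ℕ L) σ = monomial σ 1 := by rw [coe_basisMonomials]
    simp only [LinearMap.add_apply, LinearMap.comp_apply, LinearMap.id_apply, hb,
      Derivation.coeFn_coe]
    rw [sMap_monomial_one, pMap_monomial_one]
    exact key σ
  have hz := LinearMap.congr_fun hext z
  simpa using hz

def emb : MvPolynomial (Fin 2) L →ₐ[L] A := rename (Fin.val)

lemma pMap_mem_range (z : A) : pMap z ∈ Subalgebra.toSubmodule emb.range := by
  have hsp : (⊤ : Submodule L A) ≤ Submodule.comap pMap (Subalgebra.toSubmodule emb.range) := by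
    rw [← (basisMonomials ℕ L).span_eq, Submodule.span_le]
    rintro x ⟨σ, rfl⟩
    have hb : (basisMonomials ℕ L) σ = monomial σ 1 := by rw [coe_basisMonomials]
    rw [SetLike.mem_coe, Submodule.mem_comap, hb, pMap_monomial_one]
    unfold pMono
    split_ifs with hh
    · rw [Subalgebra.mem_toSubmodule]
      refine (AlgHom.mem_range emb).2 ⟨monomial (Finsupp.single 0 (σ 0) + Finsupp.single 1 (σ 1)) 1, ?_⟩
      show rename Fin.val (monomial (Finsupp.single 0 (σ 0) + Finsupp.single 1 (σ 1)) 1) = _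
      rw [rename_monomial]
      have hidx : Finsupp.mapDomain (Fin.val : Fin 2 → ℕ)
          (Finsupp.single 0 (σ 0) + Finsupp.single 1 (σ 1)) = σ := by
        rw [Finsupp.mapDomain_add, Finsupp.mapDomain_single, Finsupp.mapDomain_single]
        ext m
        rw [Finsupp.add_apply]
        have hv0 : ((0 : Fin 2) : ℕ) = 0 := rfl
        have hv1 : ((1 : Fin 2) : ℕ) = 1 := rfl
        rw [hv0, hv1, Finsupp.single_apply, Finsupp.single_apply]
        match m with
        | 0 => simp
        | 1 => simp
        | (k + 2) =>
          rw [if_neg (by omega), if_neg (by omega), hh.2 (k + 2) (by omega)]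
          omega
      rw [hidx]
    · exact Submodule.zero_mem _
  exact hsp Submodule.mem_top

lemma cycle_decomp (z : A) (hz : d z = 0) :
    ∃ (u : MvPolynomial (Fin 2) L) (c : A), z = emb u + d c := by
  have h1 := homotopy z
  rw [hz, map_zero, add_zero] at h1
  obtain ⟨u, hu⟩ := (AlgHom.mem_range emb).1
    ((Subalgebra.mem_toSubmodule _).1 (pMap_mem_range z))
  refine ⟨u, sMap z, ?_⟩
  rw [hu, add_comm]
  exact h1.symm

/-! ### Injectivity auxiliaries -/

lemma inj_aux (c : A) (σ : ℕ →₀ ℕ) (hσ : ∀ m, 1 ≤ m → σ m ≤ 1) : coeff σ (d c) = 0 := by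
  induction c using MvPolynomial.induction_on generalizing σ with
  | C r => rw [d_C, coeff_zero]
  | add p q hp hq => rw [map_add, coeff_add, hp σ hσ, hq σ hσ, add_zero]
  | mul_X p n hp =>
    rw [Derivation.leibniz, smul_eq_mul, smul_eq_mul, coeff_add]
    have hterm1 : coeff σ ((X n : A) * d p) = 0 := by
      rw [mul_comm, coeff_mul_X']
      split_ifs with hmem
      · apply hp
        intro m hm
        have h1 := hσ m hm
        rw [Finsupp.tsub_apply]
        omega
      · rfl
    have hterm2 : coeff σ (p * d (X n)) = 0 := by
      rcases Nat.lt_or_ge n 2 with hn | hn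
      · rw [d_X_le (by omega), mul_zero, coeff_zero]
      · rw [d_X_ge hn]
        have hre : p * (C h * X (n - 1) ^ 2) = (p * C h * X (n - 1)) * X (n - 1) := by ring
        rw [hre, coeff_mul_X']
        split_ifs with hmem
        · rw [coeff_mul_X', if_neg]
          intro hc
          rw [Finsupp.mem_support_iff, Finsupp.tsub_apply, Finsupp.single_apply, if_pos rfl] at hc
          have := hσ (n - 1) (by omega)
          omega
        · rfl
    rw [hterm1, hterm2, add_zero]

lemma boundary_coeff (c : A) (f : MvPolynomial (Fin 2) L) (hf : emb f = d c) :
    f ∈ Ideal.span {(X 1 : MvPolynomial (Fin 2) L) ^ 2} := by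
  rw [Ideal.mem_span_singleton]
  have hco : ∀ τ : Fin 2 →₀ ℕ, τ 1 ≤ 1 → coeff τ f = 0 := by
    intro τ hτ
    have h1 := coeff_rename_mapDomain (Fin.val) (Fin.val_injective) f τ
    show coeff τ f = 0
    rw [← h1]
    show coeff _ (emb f) = 0
    rw [hf]
    apply inj_aux
    intro m hm
    match m with
    | 1 =>
      have : Finsupp.mapDomain (Fin.val : Fin 2 → ℕ) τ ((1 : Fin 2) : ℕ) = τ 1 :=
        Finsupp.mapDomain_apply Fin.val_injective τ 1
      rw [show (((1 : Fin 2) : ℕ)) = 1 from rfl] at this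
      rw [this]
      exact hτ
    | (k + 2) =>
      rw [Finsupp.mapDomain_notin_range]
      · omega
      · rintro ⟨j, hj⟩
        have := j.isLt
        omega
  rw [as_sum f]
  apply Finset.dvd_sum
  intro τ hτ
  have h2 : 2 ≤ τ 1 := by
    by_contra hcon
    exact (mem_support_iff.1 hτ) (hco τ (by omega))
  refine ⟨monomial (τ - Finsupp.single 1 2) (coeff τ f), ?_⟩
  rw [X_pow_eq_monomial, monomial_mul, one_mul]
  have hidx : Finsupp.single (1 : Fin 2) 2 + (τ - Finsupp.single 1 2) = τ := by
    ext m
    rw [Finsupp.add_apply, Finsupp.tsub_apply, Finsupp.single_apply]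
    rcases eq_or_ne (1 : Fin 2) m with rfl | hm
    · split_ifs <;> omega
    · split_ifs <;> omega
  rw [hidx]

/-! ### The algebra maps and the equivalence -/

lemma emb_cycle (u : MvPolynomial (Fin 2) L) : d (emb u) = 0 := by
  apply derivation_eq_zero_of_forall_mem_vars
  intro i hi
  have h1 := vars_rename (Fin.val) u hi
  obtain ⟨j, -, rfl⟩ := Finset.mem_image.1 h1
  exact d_X_le (by have := j.isLt; omega)

lemma emb_mem_kerd (u : MvPolynomial (Fin 2) L) : emb u ∈ kerd := emb_cycle u

def φ : MvPolynomial (Fin 2) L →ₐ[L] kerd ⧸ imd :=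
  (Ideal.Quotient.mkₐ L imd).comp (emb.codRestrict kerd emb_mem_kerd)

lemma φ_apply (u : MvPolynomial (Fin 2) L) :
    φ u = Ideal.Quotient.mk imd ⟨emb u, emb_mem_kerd u⟩ := rfl

lemma imd_boundary (y : kerd) (hy : y ∈ imd) : ∃ a : A, d a = (y : A) := by
  induction hy using Submodule.span_induction with
  | mem x hx => exact hx
  | zero => exact ⟨0, by rw [map_zero]; rfl⟩
  | add x y hx hy hx' hy' =>
    obtain ⟨a, ha⟩ := hx'
    obtain ⟨b, hb⟩ := hy'
    exact ⟨a + b, by rw [map_add, ha, hb]; rfl⟩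
  | smul r x hx hx' =>
    obtain ⟨a, ha⟩ := hx'
    refine ⟨(r : A) * a, ?_⟩
    have hr : d (r : A) = 0 := r.2
    rw [Derivation.leibniz, smul_eq_mul, smul_eq_mul, hr, mul_zero, add_zero, ha]
    rfl

lemma φ_sq : φ ((X 1 : MvPolynomial (Fin 2) L) ^ 2) = 0 := by
  rw [φ_apply, Ideal.Quotient.eq_zero_iff_mem]
  apply Ideal.subset_span
  refine ⟨C hinv * X 2, ?_⟩
  show d (C hinv * X 2) = emb ((X 1 : MvPolynomial (Fin 2) L) ^ 2)
  rw [Derivation.leibniz, smul_eq_mul, smul_eq_mul, d_C, mul_zero, add_zero,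
    d_X_ge (by norm_num), show ((2:ℕ) - 1) = 1 from rfl, ← mul_assoc, ← C_mul, hinv_mul_h,
    C_1, one_mul]
  show _ = rename (Fin.val) ((X 1 : MvPolynomial (Fin 2) L) ^ 2)
  rw [map_pow, rename_X]
  rfl

def ψ : T2 →ₐ[L] kerd ⧸ imd :=
  Ideal.Quotient.liftₐ _ φ (by
    intro a ha
    rw [Ideal.mem_span_singleton'] at ha
    obtain ⟨r, rfl⟩ := ha
    rw [map_mul, φ_sq, mul_zero])

lemma ψ_mk (f : MvPolynomial (Fin 2) L) : ψ (Ideal.Quotient.mk _ f) = φ f := rfl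

lemma ψ_surj : Function.Surjective ψ := by
  intro t
  obtain ⟨z, rfl⟩ := Ideal.Quotient.mk_surjective t
  have hz : d (z : A) = 0 := z.2
  obtain ⟨u, c, hzc⟩ := cycle_decomp z hz
  refine ⟨Ideal.Quotient.mk _ u, ?_⟩
  rw [ψ_mk, φ_apply, Ideal.Quotient.eq]
  apply Ideal.subset_span
  refine ⟨-c, ?_⟩
  show d (-c) = ((⟨emb u, emb_mem_kerd u⟩ - z : kerd) : A)
  rw [map_neg]
  have hcoe : ((⟨emb u, emb_mem_kerd u⟩ - z : kerd) : A) = emb u - (z : A) := rfl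
  rw [hcoe, hzc]
  ring

lemma ψ_inj : Function.Injective ψ := by
  apply (injective_iff_map_eq_zero ψ).2
  intro t ht
  obtain ⟨f, rfl⟩ := Ideal.Quotient.mk_surjective t
  rw [ψ_mk, φ_apply, Ideal.Quotient.eq_zero_iff_mem] at ht
  obtain ⟨c, hc⟩ := imd_boundary _ ht
  rw [Ideal.Quotient.eq_zero_iff_mem]
  exact boundary_coeff c f hc.symm

def finalEquiv : (kerd ⧸ imd) ≃ₐ[L] T2 :=
  (AlgEquiv.ofBijective ψ ⟨ψ_inj, ψ_surj⟩).symm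

end Aux

/-- for the `F2[h^{±1}]`-linear derivation on
`F2[h^{±1}][p, v₂, v₃, …]` with `d p = d v₂ = 0` and `d vₖ = h·v_{k-1}²`
(`k ≥ 3`), `d ∘ d = 0` and `ker d / im d ≅ F2[h^{±1}][p, v₂]/(v₂²)` as
`F2[h^{±1}]`-algebras. -/
theorem stmt2 :
    d (X 0) = 0 ∧ d (X 1) = 0 ∧
    (∀ k : ℕ, 3 ≤ k → d (X (k - 1)) = C h * (X (k - 2)) ^ 2) ∧
    (∀ D : Derivation L A A, D (X 0) = 0 → D (X 1) = 0 →
      (∀ k : ℕ, 3 ≤ k → D (X (k - 1)) = C h * (X (k - 2)) ^ 2) → D = d) ∧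
    (∀ a : A, d (d a) = 0) ∧
    Nonempty ((kerd ⧸ imd) ≃ₐ[L] T2) := by
  refine ⟨Aux.d_X_le (by norm_num), Aux.d_X_le le_rfl, ?_, ?_, Aux.dd, ⟨Aux.finalEquiv⟩⟩
  · intro k hk
    rw [Aux.d_X_ge (by omega), show k - 1 - 1 = k - 2 by omega]
  · exact fun D h0 h1 hk => Aux.d_unique D h0 h1 hk

end
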